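/- arXiv:2603.08904 — 3 statements merged into one kernel-verified Lean document; each statement's English description precedes it below -/
import Mathlib

section
/- Fix α ≥ 16 and define the unstable cone C_u = {(x,y) ∈ ℝ²: |y| ≤ 4|x|/√α}. Then for each of the four matrices A = [[1±α², ±α],[∓α,1]] and every nonzero v ∈ C_u, we have Av ∈ C_u and (α² - 10α^{3/2})|v| ≤ |Av| ≤ (α² + 10α^{3/2})|v|. -/
private lemma abs_le_sqrt_sum (p q : ℝ) : |p| ≤ Real.sqrt (p^2 + q^2) := by
  have h1 : |p| = Real.sqrt (p^2) := (Real.sqrt_sq_eq_abs p).symm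
  rw [h1]; exact Real.sqrt_le_sqrt (by nlinarith [sq_nonneg q])

private lemma sqrt_sum_le_abs_add (p q : ℝ) : Real.sqrt (p^2 + q^2) ≤ |p| + |q| := by
  have h1 : p^2 + q^2 ≤ (|p| + |q|)^2 := by
    nlinarith [sq_abs p, sq_abs q, mul_nonneg (abs_nonneg p) (abs_nonneg q)]
  calc Real.sqrt (p^2+q^2) ≤ Real.sqrt ((|p|+|q|)^2) := Real.sqrt_le_sqrt h1
    _ = |p| + |q| := Real.sqrt_sq (by positivity)

set_option maxHeartbeats 1000000 in
/-- Unstable-cone invariance with two-sided expansion: for `α ≥ 16`, each derivative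
matrix `A = [[1±α², ±α],[∓α, 1]]` of the sawtooth map maps the unstable cone
`C_u = {|y| ≤ 4|x|/√α}` into itself with
`(α² - 10α^{3/2})|v| ≤ |Av| ≤ (α² + 10α^{3/2})|v|`. -/
theorem stmt_9 (α : ℝ) (hα : 16 ≤ α) (e f : ℝ)
    (he : e = 1 ∨ e = -1) (hf : f = 1 ∨ f = -1)
    (A : Matrix (Fin 2) (Fin 2) ℝ) (hA : A = !![1 + e * α ^ 2, f * α; -e * α, 1])
    (v : Fin 2 → ℝ) (hv : v ≠ 0)
    (hcone : |v 1| ≤ 4 * |v 0| / Real.sqrt α) :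
    |(A.mulVec v) 1| ≤ 4 * |(A.mulVec v) 0| / Real.sqrt α ∧
    (α ^ 2 - 10 * α ^ ((3 : ℝ) / 2)) * Real.sqrt ((v 0) ^ 2 + (v 1) ^ 2)
      ≤ Real.sqrt (((A.mulVec v) 0) ^ 2 + ((A.mulVec v) 1) ^ 2) ∧
    Real.sqrt (((A.mulVec v) 0) ^ 2 + ((A.mulVec v) 1) ^ 2)
      ≤ (α ^ 2 + 10 * α ^ ((3 : ℝ) / 2)) * Real.sqrt ((v 0) ^ 2 + (v 1) ^ 2) := by
  have hα0 : (0:ℝ) < α := by linarith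
  set s := Real.sqrt α with hsdef
  have hs0 : 0 < s := Real.sqrt_pos.mpr hα0
  have hα' : α = s ^ 2 := (Real.sq_sqrt hα0.le).symm
  have hs4 : 4 ≤ s := by nlinarith [Real.sqrt_nonneg α]
  have h32 : α ^ ((3:ℝ)/2) = s ^ 3 := by
    rw [hα', ← Real.rpow_natCast s 2, ← Real.rpow_mul hs0.le, ← Real.rpow_natCast s 3]
    norm_num
  rw [hα'] at hA
  set x := v 0 with hxdef
  set y := v 1 with hydef
  have hXnn : (0:ℝ) ≤ |x| := abs_nonneg x
  have hYnn : (0:ℝ) ≤ |y| := abs_nonneg y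
  have hY4 : s * |y| ≤ 4 * |x| := by
    have := (le_div_iff₀ hs0).mp hcone; linarith
  have h0 : A.mulVec v 0 = (1 + e*s^4)*x + f*s^2*y := by
    have : A.mulVec v 0 = (1 + e*(s^2)^2)*x + f*s^2*y := by
      rw [hxdef, hydef]
      simp [hA, Matrix.mulVec, dotProduct, Fin.sum_univ_two]
    rw [this]; ring
  have h1 : A.mulVec v 1 = -(e*s^2)*x + y := by
    rw [hxdef, hydef]
    simp [hA, Matrix.mulVec, dotProduct, Fin.sum_univ_two]
  rw [h0, h1]
  set a := (1 + e*s^4)*x + f*s^2*y with hadef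
  set b := -(e*s^2)*x + y with hbdef
  have hfa : |f| = 1 := by rcases hf with rfl | rfl <;> norm_num
  have hea : |e| = 1 := by rcases he with rfl | rfl <;> norm_num
  have hEu : |1 + e*s^4| ≤ s^4 + 1 := by
    rcases he with rfl | rfl
    · rw [abs_of_pos (by positivity)]; linarith
    · rw [show (1:ℝ) + (-1)*s^4 = -(s^4 - 1) by ring, abs_neg,
        abs_of_nonneg (by nlinarith : (0:ℝ) ≤ s^4 - 1)]
      linarith
  have hEl : s^4 - 1 ≤ |1 + e*s^4| := by
    rcases he with rfl | rfl
    · rw [abs_of_pos (by positivity)]; linarith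
    · rw [show (1:ℝ) + (-1)*s^4 = -(s^4 - 1) by ring, abs_neg,
        abs_of_nonneg (by nlinarith : (0:ℝ) ≤ s^4 - 1)]
  have haU : |a| ≤ (s^4+1)*|x| + s^2*|y| := by
    rw [hadef]
    calc |(1 + e*s^4)*x + f*s^2*y| ≤ |(1 + e*s^4)*x| + |f*s^2*y| := abs_add_le _ _
      _ = |1 + e*s^4| * |x| + |f| * |s^2| * |y| := by
          rw [abs_mul, abs_mul, abs_mul]
      _ ≤ (s^4+1)*|x| + s^2*|y| := by
          rw [hfa, abs_of_pos (by positivity : (0:ℝ) < s^2), one_mul]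
          have := mul_le_mul_of_nonneg_right hEu hXnn
          linarith
  have haL : (s^4-1)*|x| - s^2*|y| ≤ |a| := by
    have h := abs_sub_abs_le_abs_sub ((1 + e*s^4)*x) (-(f*s^2*y))
    rw [sub_neg_eq_add, abs_neg] at h
    rw [abs_mul, abs_mul, abs_mul, hfa, abs_of_pos (by positivity : (0:ℝ) < s^2),
      one_mul] at h
    have h2 := mul_le_mul_of_nonneg_right hEl hXnn
    rw [hadef]; linarith
  have hbU : |b| ≤ s^2*|x| + |y| := by
    rw [hbdef]
    calc |-(e*s^2)*x + y| ≤ |-(e*s^2)*x| + |y| := abs_add_le _ _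
      _ = |e| * |s^2| * |x| + |y| := by rw [abs_mul, abs_neg, abs_mul]
      _ = s^2*|x| + |y| := by
          rw [hea, abs_of_pos (by positivity : (0:ℝ) < s^2), one_mul]
  have hN1 : |x| ≤ Real.sqrt (x^2 + y^2) := abs_le_sqrt_sum x y
  have hN2 : Real.sqrt (x^2 + y^2) ≤ |x| + |y| := sqrt_sum_le_abs_add x y
  have hM1 : |a| ≤ Real.sqrt (a^2 + b^2) := abs_le_sqrt_sum a b
  have hM2 : Real.sqrt (a^2 + b^2) ≤ |a| + |b| := sqrt_sum_le_abs_add a b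
  have hgc : α^2 - 10*α^((3:ℝ)/2) = s^4 - 10*s^3 := by rw [h32, hα']; ring
  have hgC : α^2 + 10*α^((3:ℝ)/2) = s^4 + 10*s^3 := by rw [h32, hα']; ring
  refine ⟨?_, ?_, ?_⟩
  · rw [le_div_iff₀ hs0]
    nlinarith [mul_le_mul_of_nonneg_right hbU hs0.le,
      mul_le_mul_of_nonneg_left hY4 hs0.le, haL, hY4,
      mul_nonneg hXnn (show (0:ℝ) ≤ 4*s^4 - s^3 - 16*s - 8 by nlinarith)]
  · rw [hgc]
    rcases le_or_gt (s^4 - 10*s^3) 0 with h | h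
    · calc (s^4 - 10*s^3) * Real.sqrt (x^2 + y^2) ≤ 0 :=
            mul_nonpos_iff.mpr (Or.inr ⟨h, Real.sqrt_nonneg _⟩)
        _ ≤ Real.sqrt (a^2 + b^2) := Real.sqrt_nonneg _
    · have hs10 : 10 ≤ s := by nlinarith
      calc (s^4 - 10*s^3) * Real.sqrt (x^2 + y^2)
          ≤ (s^4 - 10*s^3) * (|x| + |y|) := mul_le_mul_of_nonneg_left hN2 h.le
        _ ≤ |a| := by
            nlinarith [haL,
              mul_le_mul_of_nonneg_left hY4
                (show (0:ℝ) ≤ s^3 - 10*s^2 + s by nlinarith),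
              mul_nonneg hXnn (show (0:ℝ) ≤ 6*s^3 + 40*s^2 - 4*s - 1 by nlinarith)]
        _ ≤ Real.sqrt (a^2 + b^2) := hM1
  · rw [hgC]
    calc Real.sqrt (a^2 + b^2) ≤ |a| + |b| := hM2
      _ ≤ (s^4 + 10*s^3) * |x| := by
          nlinarith [haU, hbU, hY4, mul_le_mul_of_nonneg_left hY4 hs0.le,
            mul_nonneg (sub_nonneg.mpr hs4) hYnn,
            mul_nonneg hXnn (show (0:ℝ) ≤ 10*s^3 - s^2 - 4*s - 2 by nlinarith)]
      _ ≤ (s^4 + 10*s^3) * Real.sqrt (x^2 + y^2) :=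
          mul_le_mul_of_nonneg_left hN1 (by positivity)
end

section
/- Let (A_i)_{i} be a finite family of 2×2 real matrices with common invariant cones: each A_i maps a closed cone C_s into itself with |A_i v| ≥ μ|v| for v ∈ C_s, and each A_i^{-1} maps a closed cone C_u (with C_s ∩ C_u = {0}) into itself, where μ = α²/2 > 1. Suppose additionally (α²-10α^{3/2})|v| ≤ |A_i v| ≤ (α²+10α^{3/2})|v| for v ∈ C_s. Let σ, σ' ∈ {1,...,4}^n be words differing in exactly one entry, and write A_σ = A_{σ_{n-1}}···A_{σ_0}. Then there is a constant C₀ independent of n and α (for α large) such that |A_σ v|/|A_{σ'} v| ≤ C₀ for every nonzero v ∈ C_s. -/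
/-- Euclidean norm on ℝ². -/
noncomputable def nrm2 (v : Fin 2 → ℝ) : ℝ := Real.sqrt ((v 0) ^ 2 + (v 1) ^ 2)

lemma nrm2_nonneg (v : Fin 2 → ℝ) : 0 ≤ nrm2 v := Real.sqrt_nonneg _

lemma abs_le_nrm2 (v : Fin 2 → ℝ) (i : Fin 2) : |v i| ≤ nrm2 v := by
  rw [nrm2, ← Real.sqrt_sq_eq_abs]
  apply Real.sqrt_le_sqrt
  fin_cases i <;> simp <;> nlinarith [sq_nonneg (v 0), sq_nonneg (v 1)]

lemma nrm2_le (v : Fin 2 → ℝ) : nrm2 v ≤ |v 0| + |v 1| := by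
  rw [nrm2]
  have h : (v 0) ^ 2 + (v 1) ^ 2 ≤ (|v 0| + |v 1|) ^ 2 := by
    have := abs_nonneg (v 0); have := abs_nonneg (v 1)
    nlinarith [sq_abs (v 0), sq_abs (v 1)]
  calc Real.sqrt ((v 0) ^ 2 + (v 1) ^ 2) ≤ Real.sqrt ((|v 0| + |v 1|) ^ 2) := Real.sqrt_le_sqrt h
  _ = |v 0| + |v 1| := Real.sqrt_sq (by positivity)

lemma mulVec_pair (M : Matrix (Fin 2) (Fin 2) ℝ) (a b : ℝ) :
    M.mulVec ![a, b] = ![M 0 0 * a + M 0 1 * b, M 1 0 * a + M 1 1 * b] := by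
  funext i
  fin_cases i <;> simp [Matrix.mulVec, dotProduct, Fin.sum_univ_two]

lemma mulVec_ne_zero (M : Matrix (Fin 2) (Fin 2) ℝ) (h : M.det ≠ 0) (v : Fin 2 → ℝ)
    (hv : v ≠ 0) : M.mulVec v ≠ 0 := by
  intro h0
  have hU : IsUnit M.det := isUnit_iff_ne_zero.mpr h
  apply hv
  have h2 : M⁻¹.mulVec (M.mulVec v) = v := by
    rw [Matrix.mulVec_mulVec, Matrix.nonsing_inv_mul M hU, Matrix.one_mulVec]
  rw [h0, Matrix.mulVec_zero] at h2; exact h2.symm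

lemma mulVec_pair' (M : Matrix (Fin 2) (Fin 2) ℝ) (a b : ℝ) :
    M.mulVec ![a, b] = ![M 0 0 * a + M 0 1 * b, M 1 0 * a + M 1 1 * b] := by
  funext i
  fin_cases i <;> simp [Matrix.mulVec, dotProduct, Fin.sum_univ_two]

lemma eig_s (c : ℝ) (hc : 0 < c) (M : Matrix (Fin 2) (Fin 2) ℝ) (hdet : M.det ≠ 0)
    (hM : ∀ v : Fin 2 → ℝ, |v 0| ≤ c * |v 1| → |(M.mulVec v) 0| ≤ c * |(M.mulVec v) 1|) :
    ∃ t lam : ℝ, |t| ≤ c ∧ M.mulVec ![t, 1] = lam • ![t, 1] := by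
  set f : ℝ → ℝ := fun u => M 0 0 * u + M 0 1 with hf
  set g : ℝ → ℝ := fun u => M 1 0 * u + M 1 1 with hg
  have hMv : ∀ u : ℝ, M.mulVec ![u, 1] = ![f u, g u] := by
    intro u; rw [mulVec_pair']; simp [hf, hg]
  have key : ∀ u : ℝ, |u| ≤ c → |f u| ≤ c * |g u| := by
    intro u hu
    have h1 := hM ![u, 1] (by simpa using hu)
    rw [hMv] at h1; simpa using h1
  have hU : IsUnit M.det := isUnit_iff_ne_zero.mpr hdet
  have hg0 : ∀ u ∈ Set.Icc (-c) c, g u ≠ 0 := by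
    intro u hu h0
    have hu' : |u| ≤ c := abs_le.mpr ⟨hu.1, hu.2⟩
    have hf0 : f u = 0 := by
      have h1 := key u hu'
      rw [h0] at h1; simp at h1
      exact h1
    have hva : M.mulVec ![u, 1] = 0 := by
      rw [hMv]; funext i; fin_cases i <;> simp [hf0, h0]
    have h2 : M⁻¹.mulVec (M.mulVec ![u, (1:ℝ)]) = ![u, 1] := by
      rw [Matrix.mulVec_mulVec, Matrix.nonsing_inv_mul M hU, Matrix.one_mulVec]
    rw [hva, Matrix.mulVec_zero] at h2
    simpa using congrFun h2.symm 1
  have hgc : Continuous g := by unfold g; continuity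
  have hcc : -c ≤ c := by linarith
  have hsame : (0 < g (-c) ∧ 0 < g c) ∨ (g (-c) < 0 ∧ g c < 0) := by
    rcases (hg0 (-c) ⟨le_refl _, hcc⟩).lt_or_gt with hn | hp
    · right
      refine ⟨hn, ?_⟩
      rcases (hg0 c ⟨hcc, le_refl _⟩).lt_or_gt with hn2 | hp2
      · exact hn2
      · exfalso
        obtain ⟨u, hu, hgu⟩ := intermediate_value_Icc hcc hgc.continuousOn
          (Set.mem_Icc.mpr ⟨hn.le, hp2.le⟩)
        exact hg0 u hu hgu
    · left
      refine ⟨hp, ?_⟩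
      rcases (hg0 c ⟨hcc, le_refl _⟩).lt_or_gt with hn2 | hp2
      · exfalso
        obtain ⟨u, hu, hgu⟩ := intermediate_value_Icc' hcc hgc.continuousOn
          (Set.mem_Icc.mpr ⟨hn2.le, hp.le⟩)
        exact hg0 u hu hgu
      · exact hp2
  set h : ℝ → ℝ := fun u => f u - u * g u with hh
  have hhc : Continuous h := by unfold h f g; continuity
  have habsc : |(-c : ℝ)| ≤ c := by rw [abs_neg, abs_of_pos hc]
  have habsc' : |(c : ℝ)| ≤ c := by rw [abs_of_pos hc]
  have main : ∃ t ∈ Set.Icc (-c) c, h t = 0 := by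
    rcases hsame with ⟨h1, h2⟩ | ⟨h1, h2⟩
    · -- g positive at both ends: h(-c) ≥ 0 ≥ h(c)
      have k1 := key (-c) habsc
      rw [abs_of_pos h1] at k1
      have k2 := key c habsc'
      rw [abs_of_pos h2] at k2
      have e1 : 0 ≤ h (-c) := by
        have := neg_abs_le (f (-c)); simp only [hh]; nlinarith
      have e2 : h c ≤ 0 := by
        have := le_abs_self (f c); simp only [hh]; nlinarith
      obtain ⟨t, ht, hht⟩ := intermediate_value_Icc' hcc hhc.continuousOn
        (Set.mem_Icc.mpr ⟨e2, e1⟩)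
      exact ⟨t, ht, hht⟩
    · have k1 := key (-c) habsc
      rw [abs_of_neg h1] at k1
      have k2 := key c habsc'
      rw [abs_of_neg h2] at k2
      have e1 : h (-c) ≤ 0 := by
        have := le_abs_self (f (-c)); simp only [hh]; nlinarith
      have e2 : 0 ≤ h c := by
        have := neg_abs_le (f c); simp only [hh]; nlinarith
      obtain ⟨t, ht, hht⟩ := intermediate_value_Icc hcc hhc.continuousOn
        (Set.mem_Icc.mpr ⟨e1, e2⟩)
      exact ⟨t, ht, hht⟩
  obtain ⟨t, htI, hht⟩ := main
  have hft : f t = t * g t := by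
    have : f t - t * g t = 0 := hht
    linarith
  refine ⟨t, g t, abs_le.mpr ⟨htI.1, htI.2⟩, ?_⟩
  rw [hMv]
  funext i
  fin_cases i <;> simp [hft] <;> ring

lemma eig_u (c : ℝ) (hc : 0 < c) (M : Matrix (Fin 2) (Fin 2) ℝ) (hdet : M.det ≠ 0)
    (hM : ∀ v : Fin 2 → ℝ, |v 1| ≤ c * |v 0| → |(M.mulVec v) 1| ≤ c * |(M.mulVec v) 0|) :
    ∃ s lam : ℝ, |s| ≤ c ∧ M.mulVec ![1, s] = lam • ![1, s] := by
  set S : Matrix (Fin 2) (Fin 2) ℝ := ![![0,1],![1,0]] with hS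
  have hSv : ∀ v : Fin 2 → ℝ, S.mulVec v = ![v 1, v 0] := by
    intro v; funext i
    fin_cases i <;> simp [Matrix.mulVec, dotProduct, Fin.sum_univ_two, hS]
  have hSS : S * S = 1 := by
    ext i j
    fin_cases i <;> fin_cases j <;>
      (rw [Matrix.mul_apply]; simp [Fin.sum_univ_two, hS, Matrix.one_apply])
  have hdetS : S.det = -1 := by
    rw [Matrix.det_fin_two]; simp [hS]
  set N : Matrix (Fin 2) (Fin 2) ℝ := S * M * S with hN
  have hdetN : N.det ≠ 0 := by
    rw [hN, Matrix.det_mul, Matrix.det_mul, hdetS]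
    simpa using hdet
  have hNv : ∀ v : Fin 2 → ℝ, N.mulVec v = ![(M.mulVec ![v 1, v 0]) 1, (M.mulVec ![v 1, v 0]) 0] := by
    intro v
    rw [hN, ← Matrix.mulVec_mulVec, ← Matrix.mulVec_mulVec, hSv v, hSv]
  have hNcone : ∀ v : Fin 2 → ℝ, |v 0| ≤ c * |v 1| →
      |(N.mulVec v) 0| ≤ c * |(N.mulVec v) 1| := by
    intro v hv
    rw [hNv]
    have := hM ![v 1, v 0] (by simpa using hv)
    simpa using this
  obtain ⟨t, lam, htc, hte⟩ := eig_s c hc N hdetN hNcone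
  refine ⟨t, lam, htc, ?_⟩
  have h3 : S.mulVec (N.mulVec ![t, 1]) = S.mulVec (lam • ![t, 1]) := by rw [hte]
  rw [Matrix.mulVec_mulVec] at h3
  have hSN : S * N = M * S := by
    rw [hN, ← mul_assoc, ← mul_assoc, hSS, one_mul]
  rw [hSN, ← Matrix.mulVec_mulVec, hSv, Matrix.mulVec_smul, hSv] at h3
  simpa using h3

lemma core (c : ℝ) (hc : 0 < c) (hc' : c ≤ 1/25)
    (M : Matrix (Fin 2) (Fin 2) ℝ) (hdet : M.det ≠ 0)
    (hMs : ∀ v : Fin 2 → ℝ, |v 0| ≤ c * |v 1| → |(M.mulVec v) 0| ≤ c * |(M.mulVec v) 1|)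
    (hMu : ∀ v : Fin 2 → ℝ, |v 1| ≤ c * |v 0| → |((M⁻¹).mulVec v) 1| ≤ c * |((M⁻¹).mulVec v) 0|)
    (w w' : Fin 2 → ℝ) (hw : |w 0| ≤ c * |w 1|) (hw' : |w' 0| ≤ c * |w' 1|)
    (hww' : nrm2 w ≤ 2 * nrm2 w') :
    nrm2 (M.mulVec w) ≤ 128 * nrm2 (M.mulVec w') := by
  have hU : IsUnit M.det := isUnit_iff_ne_zero.mpr hdet
  obtain ⟨t, lam, ht, hes⟩ := eig_s c hc M hdet hMs
  have hdetinv : (M⁻¹).det ≠ 0 := by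
    have h1 : (M⁻¹).det * M.det = 1 := by
      rw [← Matrix.det_mul, Matrix.nonsing_inv_mul M hU, Matrix.det_one]
    intro h0; rw [h0, zero_mul] at h1; exact zero_ne_one h1
  obtain ⟨s, lam', hs, heu'⟩ := eig_u c hc M⁻¹ hdetinv hMu
  have hlam' : lam' ≠ 0 := by
    intro h0
    rw [h0, zero_smul] at heu'
    have h2 : M.mulVec ((M⁻¹).mulVec ![(1:ℝ), s]) = ![(1:ℝ), s] := by
      rw [Matrix.mulVec_mulVec, Matrix.mul_nonsing_inv M hU, Matrix.one_mulVec]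
    rw [heu', Matrix.mulVec_zero] at h2
    simpa using congrFun h2 0
  have heu : M.mulVec ![(1:ℝ), s] = lam'⁻¹ • ![(1:ℝ), s] := by
    have h2 : M.mulVec ((M⁻¹).mulVec ![(1:ℝ), s]) = ![(1:ℝ), s] := by
      rw [Matrix.mulVec_mulVec, Matrix.mul_nonsing_inv M hU, Matrix.one_mulVec]
    rw [heu', Matrix.mulVec_smul] at h2
    calc M.mulVec ![(1:ℝ), s] = lam'⁻¹ • (lam' • M.mulVec ![(1:ℝ), s]) := by
          rw [smul_smul, inv_mul_cancel₀ hlam', one_smul]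
    _ = lam'⁻¹ • ![(1:ℝ), s] := by rw [h2]
  set kap := lam'⁻¹
  -- bounds on t, s products
  have hts : |t * s| ≤ 1/625 := by
    rw [abs_mul]
    calc |t| * |s| ≤ c * c := by
          apply mul_le_mul ht hs (abs_nonneg _) hc.le
    _ ≤ 1/625 := by nlinarith
  have hts1 := (abs_le.mp hts).1
  have hts2 := (abs_le.mp hts).2
  have hDpos : 0 < 1 - t * s := by linarith
  have hDne : 1 - t * s ≠ 0 := ne_of_gt hDpos
  have hDne2 : 1 - s * t ≠ 0 := by rw [mul_comm]; exact hDne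
  set P : (Fin 2 → ℝ) → ℝ := fun z => (z 1 - s * z 0) / (1 - t * s) with hP
  -- decomposition of any vector in the eigenbasis
  have hdecomp : ∀ z : Fin 2 → ℝ,
      z = (P z) • ![t, (1:ℝ)] + (((z 0 - t * z 1) / (1 - t * s))) • ![(1:ℝ), s] := by
    intro z
    funext i
    fin_cases i <;> simp [hP, Pi.smul_apply, smul_eq_mul] <;> field_simp [hDne2] <;> ring
  have hPM : ∀ z : Fin 2 → ℝ, P (M.mulVec z) = lam * P z := by
    intro z
    conv_lhs => rw [hdecomp z]
    rw [Matrix.mulVec_add, Matrix.mulVec_smul, Matrix.mulVec_smul, hes, heu]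
    simp only [hP, Pi.add_apply, Pi.smul_apply, smul_eq_mul,
      Matrix.cons_val_zero, Matrix.cons_val_one, Matrix.head_cons]
    field_simp [hDne2]
    ring
  -- |P z| ≤ 2 nrm2 z for all z
  have hP_le : ∀ z : Fin 2 → ℝ, |P z| ≤ 2 * nrm2 z := by
    intro z
    have h0 := abs_le_nrm2 z 0
    have h1 := abs_le_nrm2 z 1
    have hn := nrm2_nonneg z
    rw [hP]
    simp only
    rw [abs_div, abs_of_pos hDpos, div_le_iff₀ hDpos]
    have habs : |z 1 - s * z 0| ≤ |z 1| + |s| * |z 0| := by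
      calc |z 1 - s * z 0| ≤ |z 1| + |s * z 0| := abs_sub _ _
      _ = |z 1| + |s| * |z 0| := by rw [abs_mul]
    have hsz : |s| * |z 0| ≤ c * nrm2 z := by
      apply mul_le_mul hs h0 (abs_nonneg _) hc.le
    nlinarith
  -- for z in the cone, |z 1| ≤ 2 |P z|
  have hP_ge : ∀ z : Fin 2 → ℝ, |z 0| ≤ c * |z 1| → |z 1| ≤ 2 * |P z| := by
    intro z hz
    rw [hP]
    simp only
    rw [abs_div, abs_of_pos hDpos, ← mul_div_assoc, le_div_iff₀ hDpos]
    have habs : |z 1| - |s| * |z 0| ≤ |z 1 - s * z 0| := by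
      calc |z 1| - |s| * |z 0| = |z 1| - |s * z 0| := by rw [abs_mul]
      _ ≤ |z 1 - s * z 0| := by
            have := abs_sub_abs_le_abs_sub (z 1) (s * z 0); linarith
    have hsz : |s| * |z 0| ≤ (1/25) * ((1/25) * |z 1|) := by
      apply mul_le_mul (hs.trans hc') (hz.trans ?_) (abs_nonneg _) (by norm_num)
      exact mul_le_mul_of_nonneg_right hc' (abs_nonneg _)
    nlinarith [abs_nonneg (z 1), abs_nonneg (z 0)]
  -- cone vectors: nrm2 z ≤ 2 |z 1|
  have hcn : ∀ z : Fin 2 → ℝ, |z 0| ≤ c * |z 1| → nrm2 z ≤ 2 * |z 1| := by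
    intro z hz
    have h1 := nrm2_le z
    have h2 : c * |z 1| ≤ (1/25) * |z 1| :=
      mul_le_mul_of_nonneg_right hc' (abs_nonneg _)
    have := abs_nonneg (z 1)
    linarith
  -- the chain
  have hMw := hMs w hw
  have hchain1 : nrm2 (M.mulVec w) ≤ 8 * (|lam| * nrm2 w) := by
    have a1 := hcn _ hMw
    have a2 := hP_ge _ hMw
    have a3 : |P (M.mulVec w)| = |lam| * |P w| := by rw [hPM, abs_mul]
    have a4 := hP_le w
    have a5 : |lam| * |P w| ≤ |lam| * (2 * nrm2 w) :=
      mul_le_mul_of_nonneg_left a4 (abs_nonneg _)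
    nlinarith [abs_nonneg lam]
  have hchain2 : |lam| * nrm2 w' ≤ 8 * nrm2 (M.mulVec w') := by
    have b1 := hcn w' hw'
    have b2 := hP_ge w' hw'
    have b3 : |lam| * |P w'| = |P (M.mulVec w')| := by rw [hPM, abs_mul]
    have b4 := hP_le (M.mulVec w')
    have b5 : |lam| * nrm2 w' ≤ |lam| * (2 * |w' 1|) :=
      mul_le_mul_of_nonneg_left b1 (abs_nonneg _)
    have b6 : |lam| * |w' 1| ≤ |lam| * (2 * |P w'|) :=
      mul_le_mul_of_nonneg_left b2 (abs_nonneg _)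
    nlinarith [abs_nonneg lam]
  have hmid : |lam| * nrm2 w ≤ |lam| * (2 * nrm2 w') :=
    mul_le_mul_of_nonneg_left hww' (abs_nonneg _)
  nlinarith [nrm2_nonneg (M.mulVec w'), abs_nonneg lam, nrm2_nonneg w']

lemma prod_cone (c : ℝ) :
    ∀ L : List (Matrix (Fin 2) (Fin 2) ℝ),
    (∀ B ∈ L, ∀ v : Fin 2 → ℝ, |v 0| ≤ c * |v 1| → |(B.mulVec v) 0| ≤ c * |(B.mulVec v) 1|) →
    ∀ v : Fin 2 → ℝ, |v 0| ≤ c * |v 1| →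
      |((L.reverse.prod).mulVec v) 0| ≤ c * |((L.reverse.prod).mulVec v) 1| := by
  intro L
  induction L with
  | nil => intro _ v hv; simpa [Matrix.one_mulVec] using hv
  | cons B L ih =>
    intro h v hv
    have hrev : ((B :: L).reverse.prod) = L.reverse.prod * B := by
      simp [List.reverse_cons]
    rw [hrev, ← Matrix.mulVec_mulVec]
    exact ih (fun B' hB' => h B' (List.mem_cons_of_mem _ hB')) _
      (h B (List.mem_cons_self) v hv)

lemma prod_inv_cone (c : ℝ) :
    ∀ L : List (Matrix (Fin 2) (Fin 2) ℝ),
    (∀ B ∈ L, ∀ v : Fin 2 → ℝ, |v 1| ≤ c * |v 0| → |(B⁻¹.mulVec v) 1| ≤ c * |(B⁻¹.mulVec v) 0|) →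
    ∀ v : Fin 2 → ℝ, |v 1| ≤ c * |v 0| →
      |(((L.reverse.prod)⁻¹).mulVec v) 1| ≤ c * |(((L.reverse.prod)⁻¹).mulVec v) 0| := by
  intro L
  induction L with
  | nil => intro _ v hv; simpa [inv_one, Matrix.one_mulVec] using hv
  | cons B L ih =>
    intro h v hv
    have hrev : ((B :: L).reverse.prod) = L.reverse.prod * B := by
      simp [List.reverse_cons]
    rw [hrev, Matrix.mul_inv_rev, ← Matrix.mulVec_mulVec]
    exact h B (List.mem_cons_self) _
      (ih (fun B' hB' => h B' (List.mem_cons_of_mem _ hB')) v hv)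

lemma prod_det :
    ∀ L : List (Matrix (Fin 2) (Fin 2) ℝ),
    (∀ B ∈ L, B.det ≠ 0) → (L.reverse.prod).det ≠ 0 := by
  intro L
  induction L with
  | nil => intro _; simp
  | cons B L ih =>
    intro h
    have hrev : ((B :: L).reverse.prod) = L.reverse.prod * B := by
      simp [List.reverse_cons]
    rw [hrev, Matrix.det_mul]
    exact mul_ne_zero (ih fun B' hB' => h B' (List.mem_cons_of_mem _ hB'))
      (h B (List.mem_cons_self))


/-- Equivalence of expansion: for a finite family of 2×2 matrices sharing the invariant
cones `C_s = {|x| ≤ 4|y|/√α}` (mapped into itself with expansion `μ = α²/2` and two-sided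
bounds `α² ∓ 10α^{3/2}`) and `C_u = {|y| ≤ 4|x|/√α}` (invariant for the inverses), there
is a constant `C₀` independent of `n` and `α` (for `α` large) such that products
`A_σ = A_{σ_{n-1}}⋯A_{σ_0}` along words differing in at most one entry satisfy
`|A_σ v| ≤ C₀ |A_{σ'} v|` on the stable cone. -/
theorem stmt_10 :
    ∃ C₀ : ℝ, 0 < C₀ ∧ ∃ α₀ : ℝ, ∀ α : ℝ, α₀ ≤ α →
    ∀ (ι : Type) [Finite ι] (A : ι → Matrix (Fin 2) (Fin 2) ℝ),
    (∀ i, (A i).det ≠ 0) →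
    (∀ i (v : Fin 2 → ℝ), |v 0| ≤ 4 * |v 1| / Real.sqrt α →
        |((A i).mulVec v) 0| ≤ 4 * |((A i).mulVec v) 1| / Real.sqrt α ∧
        α ^ 2 / 2 * nrm2 v ≤ nrm2 ((A i).mulVec v) ∧
        (α ^ 2 - 10 * α ^ ((3 : ℝ) / 2)) * nrm2 v ≤ nrm2 ((A i).mulVec v) ∧
        nrm2 ((A i).mulVec v) ≤ (α ^ 2 + 10 * α ^ ((3 : ℝ) / 2)) * nrm2 v) →
    (∀ i (v : Fin 2 → ℝ), |v 1| ≤ 4 * |v 0| / Real.sqrt α →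
        |((A i)⁻¹.mulVec v) 1| ≤ 4 * |((A i)⁻¹.mulVec v) 0| / Real.sqrt α) →
    ∀ (n : ℕ) (σ σ' : Fin n → ι) (k : Fin n),
      (∀ j : Fin n, j ≠ k → σ j = σ' j) →
      ∀ v : Fin 2 → ℝ, v ≠ 0 → |v 0| ≤ 4 * |v 1| / Real.sqrt α →
      nrm2 (((List.ofFn fun j => A (σ j)).reverse.prod).mulVec v)
        ≤ C₀ * nrm2 (((List.ofFn fun j => A (σ' j)).reverse.prod).mulVec v) := by
  refine ⟨128, by norm_num, 10^4, ?_⟩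
  intro α hα ι _ A hdet hcone hconeu
  have hα0 : (0:ℝ) < α := by norm_num at hα ⊢; linarith
  have hsqrt : (100:ℝ) ≤ Real.sqrt α := by
    have h1 : Real.sqrt (10^4) ≤ Real.sqrt α := Real.sqrt_le_sqrt hα
    rwa [show ((10:ℝ)^4) = 100^2 by norm_num, Real.sqrt_sq (by norm_num)] at h1
  have hsqrt0 : (0:ℝ) < Real.sqrt α := by linarith
  set c := 4 / Real.sqrt α with hcdef
  have hc : 0 < c := by positivity
  have hc' : c ≤ 1/25 := by
    rw [hcdef, div_le_iff₀ hsqrt0]; linarith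
  have hrw : ∀ x : ℝ, 4 * x / Real.sqrt α = c * x := by
    intro x; rw [hcdef]; ring
  -- cone hypotheses in c-form
  have hconeC : ∀ i (v : Fin 2 → ℝ), |v 0| ≤ c * |v 1| →
      |((A i).mulVec v) 0| ≤ c * |((A i).mulVec v) 1| := by
    intro i v hv
    have h1 := (hcone i v (by rw [hrw]; exact hv)).1
    rwa [hrw] at h1
  have hconeuC : ∀ i (v : Fin 2 → ℝ), |v 1| ≤ c * |v 0| →
      |((A i)⁻¹.mulVec v) 1| ≤ c * |((A i)⁻¹.mulVec v) 0| := by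
    intro i v hv
    have h1 := hconeu i v (by rw [hrw]; exact hv)
    rwa [hrw] at h1
  -- one-step comparison
  have h32 : 30 * α ^ ((3:ℝ)/2) ≤ α ^ 2 := by
    have hss : Real.sqrt α * Real.sqrt α = α := Real.mul_self_sqrt hα0.le
    have h1 : α ^ ((3:ℝ)/2) = α * Real.sqrt α := by
      rw [show ((3:ℝ)/2) = 1 + 1/2 by norm_num, Real.rpow_add hα0, Real.rpow_one,
        ← Real.sqrt_eq_rpow]
    rw [h1]
    nlinarith [Real.sqrt_nonneg α]
  have hexp : ∀ i i' (v : Fin 2 → ℝ), |v 0| ≤ c * |v 1| →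
      nrm2 ((A i).mulVec v) ≤ 2 * nrm2 ((A i').mulVec v) := by
    intro i i' v hv
    have hv' : |v 0| ≤ 4 * |v 1| / Real.sqrt α := by rw [hrw]; exact hv
    have h1 := (hcone i v hv').2.2.2
    have h2 := (hcone i' v hv').2.2.1
    nlinarith [nrm2_nonneg v, mul_nonneg (sub_nonneg.mpr h32) (nrm2_nonneg v)]
  intro n
  induction n with
  | zero => intro σ σ' k; exact k.elim0
  | succ n ih =>
    intro σ σ' k hk v hv hvc
    have hvcC : |v 0| ≤ c * |v 1| := by rwa [hrw] at hvc
    have hsplit : ∀ τ : Fin (n+1) → ι,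
        ((List.ofFn fun j => A (τ j)).reverse.prod).mulVec v
        = ((List.ofFn fun j : Fin n => A (τ j.succ)).reverse.prod).mulVec
            ((A (τ 0)).mulVec v) := by
      intro τ
      rw [List.ofFn_succ, List.reverse_cons, List.prod_append, List.prod_cons,
        List.prod_nil, mul_one, ← Matrix.mulVec_mulVec]
    rw [hsplit σ, hsplit σ']
    by_cases hk0 : k = 0
    · subst hk0
      have htail : (fun j : Fin n => A (σ j.succ)) = fun j : Fin n => A (σ' j.succ) := by
        funext j; rw [hk j.succ (Fin.succ_ne_zero j)]
      rw [htail]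
      have hmem : ∀ B ∈ List.ofFn (fun j : Fin n => A (σ' j.succ)), ∃ i, B = A i := by
        intro B hB
        rw [List.mem_ofFn] at hB
        obtain ⟨j, hj⟩ := hB
        exact ⟨σ' j.succ, hj.symm⟩
      apply core c hc hc' _ ?_ ?_ ?_ _ _
        (hconeC (σ 0) v hvcC) (hconeC (σ' 0) v hvcC) (hexp (σ 0) (σ' 0) v hvcC)
      · apply prod_det
        intro B hB; obtain ⟨i, rfl⟩ := hmem B hB; exact hdet i
      · apply prod_cone
        intro B hB; obtain ⟨i, rfl⟩ := hmem B hB; exact hconeC i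
      · apply prod_inv_cone
        intro B hB; obtain ⟨i, rfl⟩ := hmem B hB; exact hconeuC i
    · obtain ⟨k', hk'⟩ : ∃ k' : Fin n, k = k'.succ :=
        ⟨k.pred hk0, (Fin.succ_pred k hk0).symm⟩
      have h0 : σ 0 = σ' 0 := hk 0 (by rw [hk']; exact (Fin.succ_ne_zero k').symm)
      rw [h0]
      refine ih (fun j => σ j.succ) (fun j => σ' j.succ) k' ?_
        ((A (σ' 0)).mulVec v) ?_ ?_
      · intro j hj
        apply hk j.succ
        rw [hk']
        intro hcontra
        exact hj (Fin.succ_injective _ hcontra)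
      · exact mulVec_ne_zero _ (hdet _) v hv
      · exact (hcone (σ' 0) v hvc).1
end

section
/- Suppose ‖L f‖_s ≤ C(α^{-2β}‖f‖_s + |f|_w), ‖L f‖_u ≤ C(α^{-p}‖f‖_u + ‖f‖_s), |f|_w ≤ C‖f‖_s, and |L f|_w ≤ Cα^{-p}(‖f‖_s + ‖f‖_u) for all f in a vector space V, where L: V → V is linear, ‖·‖_s, ‖·‖_u, |·|_w are seminorms, α > 1, and β, p > 0. Let r = min(2β,p)/2 and q = r/3. Then there exists α₀ (depending only on C, β, p) such that for all α ≥ α₀: (i) ⦀L³f⦀ ≤ α^{-r}⦀f⦀ where ⦀f⦀ = ‖f‖_s + ‖f‖_u; (ii) for every n ≥ 1, ⦀Lⁿf⦀ ≤ C' α^{2r/3} α^{-qn} ⦀f⦀; and (iii) |Lⁿf|_w ≤ C'' α^{-qn} ⦀f⦀. -/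
set_option maxHeartbeats 1000000


/-- Abstract iteration scheme: Lasota–Yorke-type inequalities for seminorms `Ns, Nu, Nw`
and a one-step weak-norm decay imply, for `α` large (depending only on `C, β, p`),
(i) a three-step contraction of the strong norm `⦀f⦀ = Ns f + Nu f` by `α^{-r}` with
`r = min(2β,p)/2`, (ii) `⦀Lⁿf⦀ ≤ C' α^{2r/3} α^{-qn} ⦀f⦀` with `q = r/3`, and
(iii) `Nw(Lⁿf) ≤ C'' α^{-qn} ⦀f⦀`. -/
theorem stmt_14 (C β p : ℝ) (hC : 0 < C) (hβ : 0 < β) (hp : 0 < p) :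
    ∃ α₀ C' C'' : ℝ, 0 < C' ∧ 0 < C'' ∧
    ∀ α : ℝ, α₀ ≤ α → 1 < α →
    ∀ (V : Type) (L : V → V) (Ns Nu Nw : V → ℝ),
    (∀ g, 0 ≤ Ns g) → (∀ g, 0 ≤ Nu g) → (∀ g, 0 ≤ Nw g) →
    (∀ g, Ns (L g) ≤ C * (α ^ (-(2 * β)) * Ns g + Nw g)) →
    (∀ g, Nu (L g) ≤ C * (α ^ (-p) * Nu g + Ns g)) →
    (∀ g, Nw g ≤ C * Ns g) →
    (∀ g, Nw (L g) ≤ C * α ^ (-p) * (Ns g + Nu g)) →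
    (∀ g, Ns (L^[3] g) + Nu (L^[3] g)
        ≤ α ^ (-(min (2 * β) p / 2)) * (Ns g + Nu g)) ∧
    (∀ n : ℕ, 1 ≤ n → ∀ g, Ns (L^[n] g) + Nu (L^[n] g)
        ≤ C' * α ^ (2 * (min (2 * β) p / 2) / 3) *
            α ^ (-(min (2 * β) p / 2 / 3 * n)) * (Ns g + Nu g)) ∧
    (∀ n : ℕ, 1 ≤ n → ∀ g, Nw (L^[n] g)
        ≤ C'' * α ^ (-(min (2 * β) p / 2 / 3 * n)) * (Ns g + Nu g)) := by
  set r : ℝ := min (2 * β) p / 2 with hrdef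
  have hr : 0 < r := div_pos (lt_min (by linarith) hp) two_pos
  have hr2β : 2 * r ≤ 2 * β := by
    have := min_le_left (2 * β) p; rw [hrdef]; linarith
  have hr2p : 2 * r ≤ p := by
    have := min_le_right (2 * β) p; rw [hrdef]; linarith
  have hBpos : (0:ℝ) < C * (C + 2) + 1 := by nlinarith
  refine ⟨(7 * C ^ 2 * (C * (C + 2) + 1) + 1) ^ r⁻¹, (C * (C + 2) + 1) ^ 2,
    C * (C * (C + 2) + 1) ^ 2, pow_pos hBpos 2, mul_pos hC (pow_pos hBpos 2), ?_⟩
  intro α hα₀ hα1 V L Ns Nu Nw hs hu hw hS hU hW0 hW1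
  set B : ℝ := C * (C + 2) + 1 with hBdef
  set D : ℝ := 7 * C ^ 2 * B with hDdef
  have hB0 : (0:ℝ) < B := hBpos
  have hB1 : (1:ℝ) ≤ B := by rw [hBdef]; nlinarith
  have hCB : C ≤ B := by rw [hBdef]; nlinarith
  have hB3 : C * (1 + C) ≤ B := by rw [hBdef]; nlinarith
  have hB4 : C * (2 + C) ≤ B := by rw [hBdef]; nlinarith
  have hα0 : (0:ℝ) < α := by linarith
  set t : ℝ := α ^ (-r) with htdef
  have ht0 : 0 < t := Real.rpow_pos_of_pos hα0 _
  have ht1 : t ≤ 1 := Real.rpow_le_one_of_one_le_of_nonpos hα1.le (by linarith)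
  have he2β : α ^ (-(2 * β)) ≤ t * t := by
    calc α ^ (-(2 * β)) ≤ α ^ (-r + -r) :=
          Real.rpow_le_rpow_of_exponent_le hα1.le (by linarith)
      _ = t * t := by rw [htdef, ← Real.rpow_add hα0]
  have hep : α ^ (-p) ≤ t * t := by
    calc α ^ (-p) ≤ α ^ (-r + -r) :=
          Real.rpow_le_rpow_of_exponent_le hα1.le (by linarith)
      _ = t * t := by rw [htdef, ← Real.rpow_add hα0]
  have he2β1 : α ^ (-(2 * β)) ≤ 1 :=
    Real.rpow_le_one_of_one_le_of_nonpos hα1.le (by linarith)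
  have hep1 : α ^ (-p) ≤ 1 :=
    Real.rpow_le_one_of_one_le_of_nonpos hα1.le (by linarith)
  have hD0 : (0:ℝ) < D + 1 := by
    rw [hDdef]; linarith [mul_nonneg (mul_nonneg (by norm_num : (0:ℝ) ≤ 7) (sq_nonneg C)) hB0.le]
  have hDt : D * t ≤ 1 := by
    have h1 : D + 1 ≤ α ^ r := by
      calc D + 1 = ((D + 1) ^ r⁻¹) ^ r := (Real.rpow_inv_rpow hD0.le hr.ne').symm
        _ ≤ α ^ r := Real.rpow_le_rpow (Real.rpow_nonneg hD0.le _) hα₀ hr.le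
    have h2 : t * α ^ r = 1 := by
      rw [htdef, ← Real.rpow_add hα0]; simp
    nlinarith [mul_le_mul_of_nonneg_right h1 ht0.le]
  -- one-step bound
  have step1 : ∀ g, Ns (L g) + Nu (L g) ≤ B * (Ns g + Nu g) := by
    intro g
    have k1 := mul_le_mul_of_nonneg_right he2β1 (hs g)
    have k2 := mul_le_mul_of_nonneg_right hep1 (hu g)
    have h1 := (hS g).trans (mul_le_mul_of_nonneg_left (add_le_add k1 (hW0 g)) hC.le)
    have h2 := (hU g).trans
      (mul_le_mul_of_nonneg_left (add_le_add k2 (le_refl (Ns g))) hC.le)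
    have p1 := mul_nonneg (sub_nonneg.2 hB4) (hs g)
    have p2 := mul_nonneg (sub_nonneg.2 hCB) (hu g)
    linarith
  -- three-step contraction
  have key3 : ∀ g, Ns (L (L (L g))) + Nu (L (L (L g))) ≤ t * (Ns g + Nu g) := by
    intro g
    have hX : 0 ≤ Ns g + Nu g := add_nonneg (hs g) (hu g)
    have htt : (0:ℝ) ≤ t * t := mul_nonneg ht0.le ht0.le
    have hs1 : Ns (L g) ≤ B * (Ns g + Nu g) := by
      have k1 := mul_le_mul_of_nonneg_right he2β1 (hs g)
      have h1 := (hS g).trans (mul_le_mul_of_nonneg_left (add_le_add k1 (hW0 g)) hC.le)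
      have p1 := mul_nonneg (sub_nonneg.2 hB3) (hs g)
      have p2 := mul_nonneg hB0.le (hu g)
      linarith
    have hu1 : Nu (L g) ≤ B * (Ns g + Nu g) := by
      have k2 := mul_le_mul_of_nonneg_right hep1 (hu g)
      have h2 := (hU g).trans
        (mul_le_mul_of_nonneg_left (add_le_add k2 (le_refl (Ns g))) hC.le)
      have p1 := mul_nonneg (sub_nonneg.2 hCB) (hs g)
      have p2 := mul_nonneg (sub_nonneg.2 hCB) (hu g)
      linarith
    have hsu1 := step1 g
    have hw1 : Nw (L g) ≤ C * (t * t) * (Ns g + Nu g) := by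
      have k := mul_le_mul_of_nonneg_right (mul_le_mul_of_nonneg_left hep hC.le) hX
      linarith [hW1 g]
    have hBX : 0 ≤ B * (Ns g + Nu g) := mul_nonneg hB0.le hX
    have hs2 : Ns (L (L g)) ≤ 2 * C * B * (t * t) * (Ns g + Nu g) := by
      have k1 : α ^ (-(2 * β)) * Ns (L g) ≤ (t * t) * (B * (Ns g + Nu g)) :=
        mul_le_mul he2β hs1 (hs _) htt
      have h1 := (hS (L g)).trans (mul_le_mul_of_nonneg_left (add_le_add k1 hw1) hC.le)
      have p1 := mul_nonneg (mul_nonneg (mul_nonneg hC.le (sub_nonneg.2 hCB)) htt) hX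
      linarith
    have hu2 : Nu (L (L g)) ≤ 2 * C * B * (Ns g + Nu g) := by
      have k2 : α ^ (-p) * Nu (L g) ≤ 1 * (B * (Ns g + Nu g)) :=
        mul_le_mul hep1 hu1 (hu _) zero_le_one
      have h2 := (hU (L g)).trans (mul_le_mul_of_nonneg_left (add_le_add k2 hs1) hC.le)
      linarith
    have hw2 : Nw (L (L g)) ≤ C * B * (t * t) * (Ns g + Nu g) := by
      have k3 : α ^ (-p) * (Ns (L g) + Nu (L g)) ≤ (t * t) * (B * (Ns g + Nu g)) :=
        mul_le_mul hep hsu1 (add_nonneg (hs _) (hu _)) htt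
      have m := mul_le_mul_of_nonneg_left k3 hC.le
      linarith [hW1 (L g)]
    have hs3 : Ns (L (L (L g))) ≤ 3 * C ^ 2 * B * (t * t) * (Ns g + Nu g) := by
      have hnn : (0:ℝ) ≤ 2 * C * B * (t * t) * (Ns g + Nu g) :=
        mul_nonneg (mul_nonneg (mul_nonneg
          (by linarith : (0:ℝ) ≤ 2 * C) hB0.le) htt) hX
      have k1 : α ^ (-(2 * β)) * Ns (L (L g))
          ≤ 1 * (2 * C * B * (t * t) * (Ns g + Nu g)) :=
        mul_le_mul he2β1 hs2 (hs _) (by linarith)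
      have h1 := (hS (L (L g))).trans
        (mul_le_mul_of_nonneg_left (add_le_add k1 hw2) hC.le)
      linarith
    have hu3 : Nu (L (L (L g))) ≤ 4 * C ^ 2 * B * (t * t) * (Ns g + Nu g) := by
      have k2 : α ^ (-p) * Nu (L (L g)) ≤ (t * t) * (2 * C * B * (Ns g + Nu g)) :=
        mul_le_mul hep hu2 (hu _) htt
      have h2 := (hU (L (L g))).trans
        (mul_le_mul_of_nonneg_left (add_le_add k2 hs2) hC.le)
      linarith
    have hfin : D * (t * t) * (Ns g + Nu g) ≤ t * (Ns g + Nu g) := by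
      have p1 := mul_nonneg (mul_nonneg (sub_nonneg.2 hDt) ht0.le) hX
      linarith
    have hsum : Ns (L (L (L g))) + Nu (L (L (L g)))
        ≤ D * (t * t) * (Ns g + Nu g) := by
      rw [hDdef]; linarith
    exact hsum.trans hfin
  have part1 : ∀ g, Ns (L^[3] g) + Nu (L^[3] g) ≤ t * (Ns g + Nu g) := by
    intro g
    simpa only [Function.iterate_succ, Function.iterate_zero, Function.comp_apply,
      id_eq] using key3 g
  -- the general iteration bound
  have key : ∀ n : ℕ, ∀ g, Ns (L^[n] g) + Nu (L^[n] g)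
      ≤ B ^ 2 * α ^ (r / 3 * (2 - (n : ℝ))) * (Ns g + Nu g) := by
    intro n
    induction n using Nat.strong_induction_on with
    | _ n ih =>
      intro g
      have hX : 0 ≤ Ns g + Nu g := add_nonneg (hs g) (hu g)
      have hone : ∀ e : ℝ, 0 ≤ e → (1:ℝ) ≤ α ^ e := by
        intro e he
        calc (1:ℝ) = α ^ (0:ℝ) := (Real.rpow_zero α).symm
          _ ≤ α ^ e := Real.rpow_le_rpow_of_exponent_le hα1.le he
      rcases lt_or_ge n 3 with h3 | h3
      · interval_cases n
        · simp only [Function.iterate_zero, id_eq, Nat.cast_zero]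
          have h := hone (r / 3 * (2 - 0)) (by nlinarith)
          have hBB : (1:ℝ) ≤ B ^ 2 := by nlinarith
          have h1 : (1:ℝ) ≤ B ^ 2 * α ^ (r / 3 * (2 - 0)) := by nlinarith
          have := mul_le_mul_of_nonneg_right h1 hX
          linarith
        · simp only [Function.iterate_one, Nat.cast_one]
          have h := hone (r / 3 * (2 - 1)) (by nlinarith)
          have h1 : B ≤ B ^ 2 * α ^ (r / 3 * (2 - 1)) := by
            nlinarith [sq_nonneg B]
          have h2 := mul_le_mul_of_nonneg_right h1 hX
          exact (step1 g).trans h2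
        · have he : r / 3 * (2 - ((2:ℕ) : ℝ)) = 0 := by norm_num
          rw [he, Real.rpow_zero, mul_one]
          have h2 := (step1 (L g)).trans
            (mul_le_mul_of_nonneg_left (step1 g) hB0.le)
          simp only [Function.iterate_succ, Function.iterate_zero,
            Function.comp_apply, id_eq]
          nlinarith [h2]
      · obtain ⟨m, rfl⟩ : ∃ m, n = m + 3 := ⟨n - 3, by omega⟩
        have hit : L^[m + 3] g = L (L (L (L^[m] g))) := by
          rw [show m + 3 = 3 + m from by omega, Function.iterate_add_apply]
          simp only [Function.iterate_succ, Function.iterate_zero,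
            Function.comp_apply, id_eq]
        rw [hit]
        have hexp : -r + r / 3 * (2 - (m : ℝ)) = r / 3 * (2 - ((m + 3 : ℕ) : ℝ)) := by
          push_cast; ring
        calc Ns (L (L (L (L^[m] g)))) + Nu (L (L (L (L^[m] g))))
            ≤ t * (Ns (L^[m] g) + Nu (L^[m] g)) := key3 _
          _ ≤ t * (B ^ 2 * α ^ (r / 3 * (2 - (m : ℝ))) * (Ns g + Nu g)) :=
              mul_le_mul_of_nonneg_left (ih m (by omega) g) ht0.le
          _ = B ^ 2 * (α ^ (-r) * α ^ (r / 3 * (2 - (m : ℝ)))) * (Ns g + Nu g) := by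
              rw [htdef]; ring
          _ = B ^ 2 * α ^ (r / 3 * (2 - ((m + 3 : ℕ) : ℝ))) * (Ns g + Nu g) := by
              rw [← Real.rpow_add hα0, hexp]
  refine ⟨part1, ?_, ?_⟩
  · intro n hn g
    calc Ns (L^[n] g) + Nu (L^[n] g)
        ≤ B ^ 2 * α ^ (r / 3 * (2 - (n : ℝ))) * (Ns g + Nu g) := key n g
      _ = B ^ 2 * α ^ (2 * r / 3) * α ^ (-(r / 3 * (n : ℝ))) * (Ns g + Nu g) := by
          rw [show r / 3 * (2 - (n : ℝ)) = 2 * r / 3 + -(r / 3 * (n : ℝ)) from by ring,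
            Real.rpow_add hα0]
          ring
  · intro n hn g
    obtain ⟨m, rfl⟩ : ∃ m, n = m + 1 := ⟨n - 1, by omega⟩
    have hX : 0 ≤ Ns g + Nu g := add_nonneg (hs g) (hu g)
    have h3 : α ^ (-p) * α ^ (r / 3 * (2 - (m : ℝ)))
        ≤ α ^ (-(r / 3 * ((m + 1 : ℕ) : ℝ))) := by
      rw [← Real.rpow_add hα0]
      apply Real.rpow_le_rpow_of_exponent_le hα1.le
      push_cast
      linarith
    rw [Function.iterate_succ_apply']
    calc Nw (L (L^[m] g)) ≤ C * α ^ (-p) * (Ns (L^[m] g) + Nu (L^[m] g)) := hW1 _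
      _ ≤ C * α ^ (-p) * (B ^ 2 * α ^ (r / 3 * (2 - (m : ℝ))) * (Ns g + Nu g)) :=
          mul_le_mul_of_nonneg_left (key m g)
            (mul_nonneg hC.le (Real.rpow_pos_of_pos hα0 _).le)
      _ = C * B ^ 2 * (α ^ (-p) * α ^ (r / 3 * (2 - (m : ℝ)))) * (Ns g + Nu g) := by
          ring
      _ ≤ C * B ^ 2 * α ^ (-(r / 3 * ((m + 1 : ℕ) : ℝ))) * (Ns g + Nu g) :=
          mul_le_mul_of_nonneg_right
            (mul_le_mul_of_nonneg_left h3 (mul_nonneg hC.le (sq_nonneg B))) hX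
end
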